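/- Let p ∈ ℕ, 1 ≤ s ≤ p, let Λ be the p×p diagonal matrix with diagonal entries λ₁,…,λ_p > 0 and let Λ₁₁ be its top-left s×s block. Let μ > 0, U, β̃ ∈ ℝ^p, and let A be a symmetric p×p real matrix whose top-left s×s block A₁₁ is invertible. Write v = U + Aβ̃ and let v₁ ∈ ℝ^s be its first s coordinates. Suppose β̂ = (β̂₁ᵀ, 0ᵀ)ᵀ and γ̂ = (γ̂₁ᵀ, 0ᵀ)ᵀ with β̂₁, γ̂₁ ∈ ℝ^s satisfying β̂₁ = A₁₁⁻¹(v₁ − μ Λ₁₁ sign(γ̂₁)) and γ̂₁ = μ Λ₁₁ A₁₁⁻¹ Λ₁₁ sign(β̂₁), where sign is applied componentwise with sign(0) = 0. Then the complementary slackness identities hold: γ̂ᵀ Λ⁻¹ A β̂ = μ ‖Λβ̂‖₁ and γ̂ᵀ Λ⁻¹ (U + A(β̃ − β̂)) = μ ‖γ̂‖₁. -/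

import Mathlib

open Matrix

lemma sum_first {p s : ℕ} (hsp : s ≤ p) (f : Fin p → ℝ)
    (hf : ∀ j : Fin p, ¬ (j : ℕ) < s → f j = 0) :
    ∑ j, f j = ∑ i : Fin s, f (Fin.castLE hsp i) := by
  classical
  have h1 : ∑ i : Fin s, f (Fin.castLE hsp i)
      = ∑ j ∈ Finset.univ.image (Fin.castLE hsp), f j :=
    (Finset.sum_image
      (by intro a _ b _ h; exact Fin.castLE_injective hsp h)).symm
  rw [h1]
  refine (Finset.sum_subset (Finset.subset_univ _) ?_).symm
  intro x _ hx
  refine hf x ?_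
  intro hxs
  exact hx (Finset.mem_image.mpr ⟨⟨(x : ℕ), hxs⟩, Finset.mem_univ _, rfl⟩)

lemma sign_mul_self' (x : ℝ) : Real.sign x * x = |x| := by
  rcases lt_trichotomy x 0 with h | h | h
  · rw [Real.sign_of_neg h, abs_of_neg h]; ring
  · simp [h]
  · rw [Real.sign_of_pos h, abs_of_pos h]; ring

/-- Verification of the complementary slackness identities for the candidate primal/dual
solutions of Lemma C.4 of the paper: with `A` symmetric, `A₁₁` invertible,
`β̂ = (β̂₁ᵀ, 0ᵀ)ᵀ`, `γ̂ = (γ̂₁ᵀ, 0ᵀ)ᵀ`, `β̂₁ = A₁₁⁻¹(v₁ − μ Λ₁₁ sign(γ̂₁))` and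
`γ̂₁ = μ Λ₁₁ A₁₁⁻¹ Λ₁₁ sign(β̂₁)` (where `v = U + Aβ̃`), one has
`γ̂ᵀ Λ⁻¹ A β̂ = μ ‖Λβ̂‖₁` and `γ̂ᵀ Λ⁻¹ (U + A(β̃ − β̂)) = μ ‖γ̂‖₁`. -/
theorem stmt_10 (p s : ℕ) (hs1 : 1 ≤ s) (hsp : s ≤ p)
    (lam : Fin p → ℝ) (hlam : ∀ j, 0 < lam j)
    (μ : ℝ) (hμ : 0 < μ) (U βt : Fin p → ℝ)
    (A : Matrix (Fin p) (Fin p) ℝ) (hAsymm : A.IsSymm)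
    (hA11 : IsUnit (A.submatrix (Fin.castLE hsp) (Fin.castLE hsp)).det)
    (β1 γ1 : Fin s → ℝ)
    (hβ1 : β1 = (A.submatrix (Fin.castLE hsp) (Fin.castLE hsp))⁻¹ *ᵥ
      ((fun i => (U + A *ᵥ βt) (Fin.castLE hsp i)) -
        μ • (Matrix.diagonal (fun i => lam (Fin.castLE hsp i)) *ᵥ
          fun i => Real.sign (γ1 i))))
    (hγ1 : γ1 = μ • ((Matrix.diagonal (fun i => lam (Fin.castLE hsp i)) *
        (A.submatrix (Fin.castLE hsp) (Fin.castLE hsp))⁻¹ *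
        Matrix.diagonal (fun i => lam (Fin.castLE hsp i))) *ᵥ
          fun i => Real.sign (β1 i)))
    (βh γh : Fin p → ℝ)
    (hβh : βh = fun j : Fin p => if h : (j : ℕ) < s then β1 ⟨j, h⟩ else 0)
    (hγh : γh = fun j : Fin p => if h : (j : ℕ) < s then γ1 ⟨j, h⟩ else 0) :
    γh ⬝ᵥ ((Matrix.diagonal fun j => (lam j)⁻¹) *ᵥ (A *ᵥ βh)) =
      μ * ∑ j, |(Matrix.diagonal lam *ᵥ βh) j| ∧
    γh ⬝ᵥ ((Matrix.diagonal fun j => (lam j)⁻¹) *ᵥ (U + A *ᵥ (βt - βh))) =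
      μ * ∑ j, |γh j| := by
  classical
  set e : Fin s → Fin p := Fin.castLE hsp with he
  set B : Matrix (Fin s) (Fin s) ℝ := A.submatrix e e with hB
  set D : Matrix (Fin s) (Fin s) ℝ := Matrix.diagonal (fun i => lam (e i)) with hD
  set sβ : Fin s → ℝ := fun i => Real.sign (β1 i) with hsβ
  set sγ : Fin s → ℝ := fun i => Real.sign (γ1 i) with hsγ
  have hβhe : ∀ k : Fin s, βh (e k) = β1 k := by
    intro k
    have hk : ((e k : Fin p) : ℕ) < s := k.isLt
    simp only [hβh, dif_pos hk]
    exact congrArg β1 (Fin.ext rfl)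
  have hγhe : ∀ k : Fin s, γh (e k) = γ1 k := by
    intro k
    have hk : ((e k : Fin p) : ℕ) < s := k.isLt
    simp only [hγh, dif_pos hk]
    exact congrArg γ1 (Fin.ext rfl)
  have hβh0 : ∀ j : Fin p, ¬ (j : ℕ) < s → βh j = 0 := by
    intro j hj; simp [hβh, dif_neg hj]
  have hγh0 : ∀ j : Fin p, ¬ (j : ℕ) < s → γh j = 0 := by
    intro j hj; simp [hγh, dif_neg hj]
  have hAe : ∀ i : Fin s, (A *ᵥ βh) (e i) = (B *ᵥ β1) i := by
    intro i
    have := sum_first hsp (fun j => A (e i) j * βh j)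
      (fun j hj => by show A (e i) j * βh j = 0; rw [hβh0 j hj, mul_zero])
    rw [← he] at this
    simpa [Matrix.mulVec, dotProduct, hB, hβhe] using this
  have hBsym : Bᵀ = B := by
    ext i j
    simp only [hB, Matrix.transpose_apply, Matrix.submatrix_apply]
    exact (hAsymm.apply (e j) (e i)).symm
  have hBB : ∀ x : Fin s → ℝ, B *ᵥ (B⁻¹ *ᵥ x) = x := by
    intro x
    rw [Matrix.mulVec_mulVec, Matrix.mul_nonsing_inv _ hA11, Matrix.one_mulVec]
  have hBβ1 : B *ᵥ β1 = (fun i => (U + A *ᵥ βt) (e i)) - μ • (D *ᵥ sγ) := by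
    rw [hβ1]; exact hBB _
  have hlamne : ∀ i : Fin s, lam (e i) ≠ 0 := fun i => (hlam (e i)).ne'
  -- key expression for γ1 divided by lam
  have hsplit : ((D * B⁻¹ * D) *ᵥ sβ) = D *ᵥ (B⁻¹ *ᵥ (D *ᵥ sβ)) := by
    rw [← Matrix.mulVec_mulVec, ← Matrix.mulVec_mulVec]
  have hg : (fun i => (lam (e i))⁻¹ * γ1 i) = μ • (B⁻¹ *ᵥ (D *ᵥ sβ)) := by
    funext i
    rw [hγ1, hsplit]
    simp only [Pi.smul_apply, smul_eq_mul, hD, Matrix.mulVec_diagonal]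
    calc (lam (e i))⁻¹ * (μ * (lam (e i) * (B⁻¹ *ᵥ (Matrix.diagonal fun i => lam (e i)) *ᵥ sβ) i))
        = μ * (B⁻¹ *ᵥ (Matrix.diagonal fun i => lam (e i)) *ᵥ sβ) i * ((lam (e i))⁻¹ * lam (e i)) := by ring
      _ = _ := by rw [inv_mul_cancel₀ (hlamne i), mul_one]
  constructor
  · -- first identity
    have hL : γh ⬝ᵥ ((Matrix.diagonal fun j => (lam j)⁻¹) *ᵥ (A *ᵥ βh))
        = ∑ i : Fin s, ((lam (e i))⁻¹ * γ1 i) * (B *ᵥ β1) i := by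
      rw [dotProduct]
      rw [sum_first hsp _ (fun j hj => by
        rw [hγh0 j hj, zero_mul])]
      refine Finset.sum_congr rfl fun i _ => ?_
      rw [Matrix.mulVec_diagonal, hγhe, hAe]
      ring
    rw [hL, show (∑ i : Fin s, ((lam (e i))⁻¹ * γ1 i) * (B *ᵥ β1) i)
        = (fun i => (lam (e i))⁻¹ * γ1 i) ⬝ᵥ (B *ᵥ β1) from rfl, hg,
      Matrix.dotProduct_mulVec, ← Matrix.mulVec_transpose, hBsym,
      Matrix.mulVec_smul, hBB]
    have hR : ∑ j, |(Matrix.diagonal lam *ᵥ βh) j|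
        = ∑ i : Fin s, lam (e i) * |β1 i| := by
      rw [sum_first hsp _ (fun j hj => by
        rw [Matrix.mulVec_diagonal, hβh0 j hj, mul_zero, abs_zero])]
      refine Finset.sum_congr rfl fun i _ => ?_
      rw [Matrix.mulVec_diagonal, hβhe, abs_mul, abs_of_pos (hlam (e i))]
    rw [hR, smul_dotProduct, smul_eq_mul, dotProduct]
    congr 1
    refine Finset.sum_congr rfl fun i _ => ?_
    simp only [hD, Matrix.mulVec_diagonal, hsβ]
    rw [mul_assoc, sign_mul_self' (β1 i)]
  · -- second identity
    have hL : γh ⬝ᵥ ((Matrix.diagonal fun j => (lam j)⁻¹) *ᵥ (U + A *ᵥ (βt - βh)))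
        = ∑ i : Fin s, γ1 i * ((lam (e i))⁻¹ *
            ((U + A *ᵥ βt) (e i) - (B *ᵥ β1) i)) := by
      rw [dotProduct]
      rw [sum_first hsp _ (fun j hj => by
        rw [hγh0 j hj, zero_mul])]
      refine Finset.sum_congr rfl fun i _ => ?_
      rw [Matrix.mulVec_diagonal, hγhe, ← hAe]
      simp only [Matrix.mulVec_sub, Pi.add_apply, Pi.sub_apply]
      ring
    rw [hL]
    have hR : ∑ j, |γh j| = ∑ i : Fin s, |γ1 i| := by
      rw [sum_first hsp _ (fun j hj => by rw [hγh0 j hj, abs_zero])]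
      exact Finset.sum_congr rfl fun i _ => by rw [hγhe]
    rw [hR, Finset.mul_sum]
    refine Finset.sum_congr rfl fun i _ => ?_
    have hdiff : (U + A *ᵥ βt) (e i) - (B *ᵥ β1) i = μ * (lam (e i) * sγ i) := by
      rw [hBβ1]
      simp only [Pi.sub_apply, Pi.smul_apply, smul_eq_mul, hD, Matrix.mulVec_diagonal]
      ring
    rw [hdiff]
    have : γ1 i * ((lam (e i))⁻¹ * (μ * (lam (e i) * sγ i)))
        = μ * (Real.sign (γ1 i) * γ1 i) := by
      calc γ1 i * ((lam (e i))⁻¹ * (μ * (lam (e i) * sγ i)))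
          = μ * (sγ i * γ1 i) * ((lam (e i))⁻¹ * lam (e i)) := by ring
        _ = μ * (Real.sign (γ1 i) * γ1 i) := by
            rw [inv_mul_cancel₀ (hlamne i), mul_one]
    rw [this, sign_mul_self']
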